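/- Let G be a finite group whose Sylow p-subgroup P is cyclic of order p, let h ∈ G be an element whose order is divisible by p, and write h = h_p · h_{p'} as the product of its commuting p-part and p′-part. Then C_G(h_p) = ⟨h_p⟩ × Q for some p′-subgroup Q of G, and h_{p'} ∈ Q. -/

import Mathlib

/-- If the Sylow `p`-subgroups of a finite group `G` are of order `p`, `h ∈ G` has
order divisible by `p`, and `h = a * b` is the decomposition of `h` into its
commuting `p`-part `a` and `p'`-part `b`, then the centralizer of `a` decomposes as
the internal direct product `⟨a⟩ × Q` for a `p'`-subgroup `Q` of `G` containing `b`. -/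
theorem centralizer_p_part_decomposition {G : Type*} [Group G] [Fintype G]
    {p : ℕ} (hp : p.Prime)
    (hSyl : ∀ P : Sylow p G, Nat.card P = p)
    (h a b : G) (hcomm : a * b = b * a) (hab : h = a * b)
    (ha : ∃ n : ℕ, orderOf a = p ^ n) (hb : ¬ p ∣ orderOf b)
    (hph : p ∣ orderOf h) :
    ∃ Q : Subgroup G,
      ¬ p ∣ Nat.card Q ∧
      b ∈ Q ∧
      Q ≤ Subgroup.centralizer {a} ∧
      Subgroup.zpowers a ⊔ Q = Subgroup.centralizer {a} ∧
      Subgroup.zpowers a ⊓ Q = ⊥ := by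
  haveI : Fact p.Prime := ⟨hp⟩
  obtain ⟨n, han⟩ := ha
  -- p^2 does not divide |G|
  have hG2 : ¬ p ^ 2 ∣ Nat.card G := by
    obtain ⟨P₀⟩ := (inferInstance : Nonempty (Sylow p G))
    intro hdvd
    have h1 : ¬ p ∣ (P₀ : Subgroup G).index := P₀.not_dvd_index
    have h2 : Nat.card (P₀ : Subgroup G) * (P₀ : Subgroup G).index = Nat.card G :=
      Subgroup.card_mul_index _
    rw [hSyl P₀] at h2
    apply h1
    have : p * p ∣ p * (P₀ : Subgroup G).index := by
      rw [h2, ← pow_two]; exact hdvd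
    exact (mul_dvd_mul_iff_left hp.pos.ne').mp this
  -- order of a is p
  have hoa : orderOf a = p := by
    have hcop : Nat.Coprime (orderOf a) (orderOf b) := by
      rw [han]
      exact Nat.Coprime.pow_left _ ((hp.coprime_iff_not_dvd).mpr hb)
    have horder : orderOf h = orderOf a * orderOf b := by
      rw [hab]
      exact (Commute.orderOf_mul_eq_mul_orderOf_of_coprime hcomm hcop)
    have hpa : p ∣ orderOf a := by
      rw [horder] at hph
      rcases (hp.dvd_mul.mp hph) with h1 | h1
      · exact h1
      · exact absurd h1 hb
    have hdiv : orderOf a ∣ Nat.card G := orderOf_dvd_natCard a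
    rw [han] at hpa hdiv ⊢
    have hn1 : 1 ≤ n := by
      rcases Nat.eq_zero_or_pos n with h0 | h0
      · subst h0; rw [pow_zero] at hpa
        exact absurd (Nat.dvd_one.mp hpa) hp.ne_one
      · exact h0
    have hn2 : n < 2 := by
      by_contra hn
      push_neg at hn
      exact hG2 ((pow_dvd_pow p hn).trans hdiv)
    have : n = 1 := le_antisymm (by omega) hn1
    rw [this, pow_one]
  have hamem : a ∈ Subgroup.centralizer {a} :=
    Subgroup.mem_centralizer_singleton_iff.mpr rfl
  have hbmem : b ∈ Subgroup.centralizer {a} :=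
    Subgroup.mem_centralizer_singleton_iff.mpr hcomm.symm
  set C := Subgroup.centralizer ({a} : Set G) with hC
  let a' : C := ⟨a, hamem⟩
  have hoa' : orderOf a' = p := by
    rw [← hoa]; exact Subgroup.orderOf_mk a hamem
  -- a' is central in C
  have hacen : ∀ x : C, x * a' = a' * x := by
    rintro ⟨x, hx⟩
    have := Subgroup.mem_centralizer_singleton_iff.mp hx
    exact Subtype.ext this
  -- Sylow p-subgroup of C containing zpowers a'
  have hpgrp : IsPGroup p (Subgroup.zpowers a') :=
    IsPGroup.of_card (by rw [Nat.card_zpowers, hoa', pow_one])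
  obtain ⟨P', hP'le⟩ := hpgrp.exists_le_sylow
  -- card of P' is p
  have hcardzp : Nat.card (Subgroup.zpowers a') = p := by
    rw [Nat.card_zpowers, hoa']
  have hcardP' : Nat.card (P' : Subgroup C) = p := by
    obtain ⟨m, hm⟩ := IsPGroup.iff_card.mp P'.2
    have hdvd1 : p ∣ Nat.card (P' : Subgroup C) := by
      have := Subgroup.card_dvd_of_le hP'le
      rwa [hcardzp] at this
    have hdvd2 : Nat.card (P' : Subgroup C) ∣ Nat.card G := by
      calc Nat.card (P' : Subgroup C) ∣ Nat.card C := Subgroup.card_subgroup_dvd_card _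
        _ ∣ Nat.card G := Subgroup.card_subgroup_dvd_card _
    have hdvd1' : p ∣ p ^ m := hm ▸ hdvd1
    have hdvd2' : p ^ m ∣ Nat.card G := hm ▸ hdvd2
    have hm1 : 1 ≤ m := by
      rcases Nat.eq_zero_or_pos m with h0 | h0
      · subst h0; rw [pow_zero, Nat.dvd_one] at hdvd1'
        exact absurd hdvd1' hp.ne_one
      · exact h0
    have hm2 : m < 2 := by
      by_contra hm2
      push_neg at hm2
      exact hG2 ((pow_dvd_pow p hm2).trans hdvd2')
    have : m = 1 := le_antisymm (by omega) hm1
    rw [hm, this, pow_one]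
  -- P' = zpowers a'
  have hP'eq : (P' : Subgroup C) = Subgroup.zpowers a' := by
    exact (Subgroup.eq_of_le_of_card_ge hP'le (by rw [hcardzp, hcardP'])).symm
  -- normalizer condition
  have hNC : Subgroup.normalizer ((P' : Subgroup C) : Set C) ≤ Subgroup.centralizer ((P' : Subgroup C) : Set C) := by
    intro x _
    rw [Subgroup.mem_centralizer_iff]
    intro y hy
    rw [hP'eq] at hy
    obtain ⟨k, hk⟩ := Subgroup.mem_zpowers_iff.mp hy
    have hxa : Commute x a' := hacen x
    rw [← hk]
    exact ((hxa.zpow_right k).symm).eq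
  -- Burnside
  have hcompl := MonoidHom.ker_transferSylow_isComplement' P' hNC
  set K : Subgroup C := (MonoidHom.transferSylow P' hNC).ker with hK
  have hKcard : ¬ p ∣ Nat.card K := MonoidHom.not_dvd_card_ker_transferSylow P' hNC
  refine ⟨K.map C.subtype, ?_, ?_, ?_, ?_, ?_⟩
  · have hQc : Nat.card (K.map C.subtype) = Nat.card K :=
      Nat.card_congr (Subgroup.equivMapOfInjective K C.subtype
        C.subtype_injective).toEquiv.symm
    rwa [hQc]
  · -- b ∈ Q
    have hbK : (⟨b, hbmem⟩ : C) ∈ K := by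
      rw [hK, MonoidHom.mem_ker]
      have hdvd1 : orderOf (MonoidHom.transferSylow P' hNC ⟨b, hbmem⟩) ∣ orderOf b := by
        have := orderOf_map_dvd (MonoidHom.transferSylow P' hNC) (⟨b, hbmem⟩ : C)
        rwa [Subgroup.orderOf_mk b hbmem] at this
      have hdvd2 : orderOf (MonoidHom.transferSylow P' hNC ⟨b, hbmem⟩) ∣ p := by
        have := Subgroup.orderOf_dvd_natCard (P' : Subgroup C) (MonoidHom.transferSylow P' hNC ⟨b, hbmem⟩).2
        rw [hcardP'] at this
        rwa [Subgroup.orderOf_coe] at this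
      rcases (Nat.Prime.eq_one_or_self_of_dvd hp _ hdvd2) with h1 | h1
      · exact orderOf_eq_one_iff.mp h1
      · exact absurd (h1 ▸ hdvd1) hb
    exact ⟨⟨b, hbmem⟩, hbK, rfl⟩
  · exact Subgroup.map_subtype_le K
  · -- sup
    have hsup : K ⊔ (P' : Subgroup C) = ⊤ := hcompl.sup_eq_top
    have : (K ⊔ (P' : Subgroup C)).map C.subtype = (⊤ : Subgroup C).map C.subtype := by
      rw [hsup]
    rw [Subgroup.map_sup, hP'eq] at this
    have hzp : (Subgroup.zpowers a').map C.subtype = Subgroup.zpowers a :=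
      MonoidHom.map_zpowers C.subtype a'
    have htop : (⊤ : Subgroup C).map C.subtype = C := by
      rw [← MonoidHom.range_eq_map]
      exact C.range_subtype
    rw [hzp, htop] at this
    rw [sup_comm] at this
    exact this
  · -- inf
    have hdisj : Disjoint K (P' : Subgroup C) := hcompl.disjoint
    rw [eq_bot_iff]
    rintro x ⟨hx1, hx2⟩
    obtain ⟨⟨y, hyC⟩, hyK, hyx⟩ := hx2
    have hxC : x ∈ C := by rw [← hyx]; exact hyC
    have hx1' : (⟨x, hxC⟩ : C) ∈ (P' : Subgroup C) := by
      rw [hP'eq]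
      obtain ⟨k, hk⟩ := Subgroup.mem_zpowers_iff.mp hx1
      exact Subgroup.mem_zpowers_iff.mpr ⟨k, Subtype.ext (by simpa using hk)⟩
    have hx1'' : (⟨x, hxC⟩ : C) ∈ K := by
      have : (⟨y, hyC⟩ : C) = ⟨x, hxC⟩ := Subtype.ext hyx
      rwa [this] at hyK
    have := hdisj.le_bot ⟨hx1'', hx1'⟩
    rw [Subgroup.mem_bot] at this
    have : x = 1 := by simpa using congrArg (Subtype.val) this
    simp [this]
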